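/- arXiv:0806.0757 — 4 statements merged into one kernel-verified Lean document; each statement's English description precedes it below -/
import Mathlib

section
/- For two stiffened gases with common pressure p and temperature T, the mixture pressure law holds: if ρ = ((1+α)/2)ρ⁺ + ((1-α)/2)ρ⁻ and ρe = ((1+α)/2)ρ⁺e⁺ + ((1-α)/2)ρ⁻e⁻, where (ρ±, e±) satisfy the stiffened gas EOS at (p,T), then p = (γ(α)-1)ρe - π(α), with γ(α) and π(α) given by the harmonic-type mixing rules. -/
/-- Mixture pressure law for two stiffened gases at common pressure and
temperature: `p = (γ(α)-1) ρe − π(α)`. -/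
theorem mixture_pressure_law (α p T γp γm πp πm CVp CVm ρp ρm ep em γα πα ρ E : ℝ)
    (hα : α ∈ Set.Icc (-1 : ℝ) 1)
    (hγp : 1 < γp) (hγm : 1 < γm) (hCVp : 0 < CVp) (hCVm : 0 < CVm)
    (hπp : 0 ≤ πp) (hπm : 0 ≤ πm)
    (hρp : 0 < ρp) (hρm : 0 < ρm)
    -- stiffened gas EOS for each fluid at common (p, T)
    (hPp : p + πp = (γp - 1) * ρp * ep)
    (hPm : p + πm = (γm - 1) * ρm * em)
    (hep : ep = CVp * T + πp / (γp * ρp))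
    (hem : em = CVm * T + πm / (γm * ρm))
    -- mixing rules
    (hγα : 2 / (γα - 1) = (1 + α) / (γp - 1) + (1 - α) / (γm - 1))
    (hπα : 2 * πα / (γα - 1) = (1 + α) * πp / (γp - 1) + (1 - α) * πm / (γm - 1))
    -- mixture density and energy density
    (hρ : ρ = (1 + α) / 2 * ρp + (1 - α) / 2 * ρm)
    (hE : E = (1 + α) / 2 * ρp * ep + (1 - α) / 2 * ρm * em) :
    p = (γα - 1) * E - πα := by
  obtain ⟨hα1, hα2⟩ := hα
  have hgp : (0:ℝ) < γp - 1 := by linarith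
  have hgm : (0:ℝ) < γm - 1 := by linarith
  have hA : 0 < (1 + α) / (γp - 1) + (1 - α) / (γm - 1) := by
    rcases lt_or_ge α 1 with h | h
    · have h2 : 0 < (1 - α) / (γm - 1) := div_pos (by linarith) hgm
      have h1 : 0 ≤ (1 + α) / (γp - 1) := div_nonneg (by linarith) hgp.le
      linarith
    · have h1 : 0 < (1 + α) / (γp - 1) := div_pos (by linarith) hgp
      have h2 : 0 ≤ (1 - α) / (γm - 1) := div_nonneg (by linarith) hgm.le
      linarith
  have hs : γα - 1 ≠ 0 := by
    intro h
    rw [h, div_zero] at hγα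
    linarith [hA, hγα]
  have hγα' : 2 * (γp - 1) * (γm - 1) =
      (γα - 1) * ((1 + α) * (γm - 1) + (1 - α) * (γp - 1)) := by
    field_simp at hγα
    linarith [hγα]
  have hπα' : 2 * πα * (γp - 1) * (γm - 1) =
      (γα - 1) * ((1 + α) * πp * (γm - 1) + (1 - α) * πm * (γp - 1)) := by
    field_simp at hπα
    linarith [hπα]
  rw [hE]
  have hc : (2 * (γp - 1) * (γm - 1)) ≠ 0 := by positivity
  have key : 2 * (γp - 1) * (γm - 1) * p =
      2 * (γp - 1) * (γm - 1) *
        ((γα - 1) * ((1 + α) / 2 * ρp * ep + (1 - α) / 2 * ρm * em) - πα) := by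
    linear_combination ((γα - 1) * (1 + α) * (γm - 1)) * hPp +
      ((γα - 1) * (1 - α) * (γp - 1)) * hPm + p * hγα' + hπα'
  exact mul_left_cancel₀ hc key
end

section
/- For two stiffened gases at common pressure p and temperature T, the mixture temperature law holds: T = (ρe - (λ⁺(α)π⁺ + λ⁻(α)π⁻))/(ρ C_V(α)), where ρ and ρe are the volume-fraction-weighted mixture density and energy density. -/
set_option maxHeartbeats 2000000


/-- Mixture temperature law for two stiffened gases at common pressure and
temperature: `T = (ρe − (λ⁺π⁺ + λ⁻π⁻)) / (ρ C_V(α))`. -/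
theorem mixture_temperature_law
    (α p T γp γm πp πm CVp CVm ρp ρm ep em CVα lamP lamM ρ E : ℝ)
    (hα : α ∈ Set.Icc (-1 : ℝ) 1)
    (hγp : 1 < γp) (hγm : 1 < γm) (hCVp : 0 < CVp) (hCVm : 0 < CVm)
    (hπp : 0 ≤ πp) (hπm : 0 ≤ πm)
    (hρp : 0 < ρp) (hρm : 0 < ρm)
    -- stiffened gas EOS for each fluid at common (p, T)
    (hPp : p + πp = (γp - 1) * ρp * ep)
    (hPm : p + πm = (γm - 1) * ρm * em)
    (hep : ep = CVp * T + πp / (γp * ρp))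
    (hem : em = CVm * T + πm / (γm * ρm))
    -- mixture heat capacity and the coefficients λ±
    (hCVα : ((1 + α) / (CVp * (γp - 1)) + (1 - α) / (CVm * (γm - 1))) * CVα
        = (1 + α) / (γp - 1) + (1 - α) / (γm - 1))
    (hlamP : lamP = (1 + α) / (2 * (γp - 1)) * (1 - CVα / (γp * CVp)))
    (hlamM : lamM = (1 - α) / (2 * (γm - 1)) * (1 - CVα / (γm * CVm)))
    -- mixture density and energy density
    (hρ : ρ = (1 + α) / 2 * ρp + (1 - α) / 2 * ρm)
    (hE : E = (1 + α) / 2 * ρp * ep + (1 - α) / 2 * ρm * em) :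
    T = (E - (lamP * πp + lamM * πm)) / (ρ * CVα) := by
  obtain ⟨hα1, hα2⟩ := hα
  have h1p : (0:ℝ) ≤ 1 + α := by linarith
  have h1m : (0:ℝ) ≤ 1 - α := by linarith
  have hgp : (0:ℝ) < γp - 1 := by linarith
  have hgm : (0:ℝ) < γm - 1 := by linarith
  have hγp0 : γp ≠ 0 := by positivity
  have hγm0 : γm ≠ 0 := by positivity
  have hN : (0:ℝ) < (1 + α) / (γp - 1) + (1 - α) / (γm - 1) := by
    rcases lt_or_eq_of_le h1p with h | h
    · have : (0:ℝ) < (1 + α) / (γp - 1) := by positivity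
      have : (0:ℝ) ≤ (1 - α) / (γm - 1) := by positivity
      linarith
    · have h2 : (0:ℝ) < (1 - α) / (γm - 1) := by
        have : (0:ℝ) < 1 - α := by linarith
        positivity
      have : (0:ℝ) ≤ (1 + α) / (γp - 1) := by positivity
      linarith
  have hD : (0:ℝ) < (1 + α) / (CVp * (γp - 1)) + (1 - α) / (CVm * (γm - 1)) := by
    rcases lt_or_eq_of_le h1p with h | h
    · have : (0:ℝ) < (1 + α) / (CVp * (γp - 1)) := by positivity
      have : (0:ℝ) ≤ (1 - α) / (CVm * (γm - 1)) := by positivity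
      linarith
    · have h2 : (0:ℝ) < (1 - α) / (CVm * (γm - 1)) := by
        have : (0:ℝ) < 1 - α := by linarith
        positivity
      have : (0:ℝ) ≤ (1 + α) / (CVm * (γm - 1)) := by positivity
      have : (0:ℝ) ≤ (1 + α) / (CVp * (γp - 1)) := by positivity
      linarith
  have hCVαpos : (0:ℝ) < CVα := by nlinarith [hCVα, hD, hN]
  have hρpos : (0:ℝ) < ρ := by
    rw [hρ]
    rcases lt_or_eq_of_le h1p with h | h
    · have : (0:ℝ) < (1 + α) / 2 * ρp := by positivity
      have : (0:ℝ) ≤ (1 - α) / 2 * ρm := by positivity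
      linarith
    · have h2 : (0:ℝ) < (1 - α) / 2 * ρm := by
        have : (0:ℝ) < 1 - α := by linarith
        positivity
      have : (0:ℝ) ≤ (1 + α) / 2 * ρp := by positivity
      linarith
  rw [eq_div_iff (by positivity)]
  subst hep hem hE hlamP hlamM hρ
  field_simp at hPp hPm hCVα ⊢
  have hcore : ((1 + α) * (CVm * (γm - 1)) + (1 - α) * (CVp * (γp - 1))) * CVα
      = ((1 + α) * (γm - 1) + (1 - α) * (γp - 1)) * (CVp * CVm) := by
    have hne : (γp - 1) * (γm - 1) ≠ 0 := by positivity
    apply mul_right_cancel₀ hne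
    linear_combination ((γp - 1) * (γm - 1)) * hCVα
  linear_combination ((1+α)*(CVp-CVα)*γm*(γm-1)*CVm) * hPp
    + ((1-α)*(CVm-CVα)*γp*(γp-1)*CVp) * hPm
    + (p*γp*γm) * hcore
end

section
/- The mixture sound speed defined by 1/(ρc_s²) = (1+α)γ⁺/(2ρ⁺(c_s⁺)²) + (1-α)γ⁻/(2ρ⁻(c_s⁻)²) − 1/(ρa²), with ρa² = ((1+α)ρ⁺(c_s⁺)²)/(2(γ⁺-1)) + ((1-α)ρ⁻(c_s⁻)²)/(2(γ⁻-1)), satisfies c_s² > 0 for all α ∈ (-1,1): i.e., the right-hand side is strictly positive. -/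
/-- Positivity of `1/(ρ c_s²)`: the mixture sound speed is well defined. -/
theorem mixture_sound_speed_positive (α ρp ρm cp cm γp γm ρa2 : ℝ)
    (hα : α ∈ Set.Ioo (-1 : ℝ) 1)
    (hρp : 0 < ρp) (hρm : 0 < ρm) (hcp : 0 < cp) (hcm : 0 < cm)
    (hγp : 1 < γp) (hγm : 1 < γm)
    (hρa2 : ρa2 = (1 + α) * ρp * cp ^ 2 / (2 * (γp - 1))
        + (1 - α) * ρm * cm ^ 2 / (2 * (γm - 1))) :
    0 < (1 + α) * γp / (2 * ρp * cp ^ 2) + (1 - α) * γm / (2 * ρm * cm ^ 2)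
        - 1 / ρa2 := by
  obtain ⟨hα1, hα2⟩ := hα
  have ha : (0:ℝ) < 1 + α := by linarith
  have hb : (0:ℝ) < 1 - α := by linarith
  have hp : (0:ℝ) < ρp * cp ^ 2 := by positivity
  have hm : (0:ℝ) < ρm * cm ^ 2 := by positivity
  have hg : (0:ℝ) < γp - 1 := by linarith
  have hh : (0:ℝ) < γm - 1 := by linarith
  have hρa2pos : 0 < ρa2 := by rw [hρa2]; positivity
  have key : 1 / ρa2 ≤ (1 + α) * (γp - 1) / (2 * ρp * cp ^ 2)
      + (1 - α) * (γm - 1) / (2 * ρm * cm ^ 2) := by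
    rw [div_le_iff₀ hρa2pos, hρa2]
    rw [div_add_div _ _ (by positivity : (2 * (γp - 1)) ≠ 0) (by positivity : (2 * (γm - 1)) ≠ 0),
        div_add_div _ _ (by positivity : (2 * ρp * cp ^ 2) ≠ 0) (by positivity : (2 * ρm * cm ^ 2) ≠ 0)]
    rw [div_mul_div_comm, le_div_iff₀ (by positivity), one_mul]
    nlinarith [mul_nonneg (mul_pos ha hb).le
        (sq_nonneg ((γp - 1) * (ρm * cm ^ 2) - (γm - 1) * (ρp * cp ^ 2))),
      mul_pos hp hm, mul_pos hg hh,
      mul_pos (mul_pos (mul_pos ha hb) (mul_pos hp hm)) (mul_pos hg hh)]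
  have hlt1 : (1 + α) * (γp - 1) / (2 * ρp * cp ^ 2) < (1 + α) * γp / (2 * ρp * cp ^ 2) :=
    (div_lt_div_iff_of_pos_right (by positivity)).mpr (by nlinarith)
  have hlt2 : (1 - α) * (γm - 1) / (2 * ρm * cm ^ 2) < (1 - α) * γm / (2 * ρm * cm ^ 2) :=
    (div_lt_div_iff_of_pos_right (by positivity)).mpr (by nlinarith)
  linarith
end

section
/- If π⁺ = 0 and π⁻ = 0 (both fluids are ideal gases at common pressure p and temperature T), then the mixture sound speed satisfies c_s² = γ(α)p/ρ and a² = c_s²/(γ(α)-1), where γ(α) is defined by 2/(γ(α)-1) = (1+α)/(γ⁺-1) + (1-α)/(γ⁻-1). -/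
/-- Ideal gas case (`π⁺ = π⁻ = 0`): the mixture sound speed satisfies
`c_s² = γ(α) p / ρ` and `a² = c_s²/(γ(α)-1)`. -/
theorem mixture_sound_speed_ideal_gas (α p ρp ρm γp γm cp2 cm2 γα ρ ρa2 cs2 a2 : ℝ)
    (hα : α ∈ Set.Ioo (-1 : ℝ) 1)
    (hp : 0 < p) (hρp : 0 < ρp) (hρm : 0 < ρm) (hγp : 1 < γp) (hγm : 1 < γm)
    -- ideal gas sound speeds (π± = 0)
    (hcp2 : cp2 = γp * p / ρp) (hcm2 : cm2 = γm * p / ρm)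
    -- mixture adiabatic exponent
    (hγα : 2 / (γα - 1) = (1 + α) / (γp - 1) + (1 - α) / (γm - 1))
    -- mixture density, ρa² and the sound speed relation
    (hρ : ρ = (1 + α) / 2 * ρp + (1 - α) / 2 * ρm)
    (hρa2 : ρa2 = (1 + α) * ρp * cp2 / (2 * (γp - 1))
        + (1 - α) * ρm * cm2 / (2 * (γm - 1)))
    (ha2 : ρ * a2 = ρa2)
    (hcs2pos : 0 < cs2)
    (hcs2 : 1 / (ρ * cs2) = (1 + α) * γp / (2 * ρp * cp2)
        + (1 - α) * γm / (2 * ρm * cm2) - 1 / ρa2) :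
    cs2 = γα * p / ρ ∧ a2 = cs2 / (γα - 1) := by
  obtain ⟨hα1, hα2⟩ := hα
  have h1α : (0:ℝ) < 1 + α := by linarith
  have h2α : (0:ℝ) < 1 - α := by linarith
  have hgp : (0:ℝ) < γp - 1 := by linarith
  have hgm : (0:ℝ) < γm - 1 := by linarith
  have hγp0 : (0:ℝ) < γp := by linarith
  have hγm0 : (0:ℝ) < γm := by linarith
  have hρpos : 0 < ρ := by rw [hρ]; positivity
  have hKpos : 0 < (1 + α) / (γp - 1) + (1 - α) / (γm - 1) := by positivity
  have hγα1 : γα - 1 ≠ 0 := by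
    intro h
    rw [h, div_zero] at hγα
    linarith
  have hgapos : 0 < γα - 1 := by
    rcases lt_or_gt_of_ne hγα1 with h | h
    · exfalso
      have : 2 / (γα - 1) < 0 := div_neg_of_pos_of_neg (by norm_num) h
      linarith
    · exact h
  have hgapos' : 0 < γα := by linarith
  have hK : (γα - 1) * ((1 + α) * (γm - 1) + (1 - α) * (γp - 1)) = 2 * (γp - 1) * (γm - 1) := by
    field_simp at hγα
    linarith [hγα]
  have hρa2' : ρa2 * (γα - 1) = p * γα := by
    rw [hρa2, hcp2, hcm2]
    field_simp
    linear_combination hK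
  have hρa2pos : 0 < ρa2 := by
    nlinarith [hρa2']
  -- simplify hcs2
  have e1 : 2 * ρp * cp2 = 2 * (γp * p) := by rw [hcp2]; field_simp
  have e2 : 2 * ρm * cm2 = 2 * (γm * p) := by rw [hcm2]; field_simp
  rw [e1, e2] at hcs2
  have hcs2' : 1 / (ρ * cs2) = 1 / p - 1 / ρa2 := by
    rw [hcs2]
    have : (1 + α) * γp / (2 * (γp * p)) = (1 + α) / (2 * p) := by
      rw [div_eq_div_iff (by positivity) (by positivity)]; ring
    rw [this]
    have : (1 - α) * γm / (2 * (γm * p)) = (1 - α) / (2 * p) := by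
      rw [div_eq_div_iff (by positivity) (by positivity)]; ring
    rw [this]
    have : (1 + α) / (2 * p) + (1 - α) / (2 * p) = 1 / p := by
      rw [← add_div, div_eq_div_iff (by positivity) (by positivity)]; ring
    rw [this]
  have hr : 1 / p - 1 / ρa2 = 1 / (p * γα) := by
    rw [div_sub_div _ _ (ne_of_gt hp) (ne_of_gt hρa2pos),
      div_eq_div_iff (by positivity) (by positivity)]
    linear_combination p * hρa2'
  have hmain : ρ * cs2 = p * γα := by
    have h := hcs2'.trans hr
    rw [div_eq_div_iff (by positivity) (by positivity)] at h
    linarith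
  have hc : cs2 = γα * p / ρ := by
    rw [eq_div_iff (ne_of_gt hρpos)]
    linarith [hmain]
  refine ⟨hc, ?_⟩
  have ha : a2 = ρa2 / ρ := by
    rw [← ha2, mul_comm, mul_div_assoc, div_self (ne_of_gt hρpos), mul_one]
  rw [ha, hc, div_div, div_eq_div_iff (ne_of_gt hρpos) (by positivity)]
  linear_combination ρ * hρa2'
end
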